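/- arXiv:math/0511649 — 2 statements merged into one kernel-verified Lean document; each statement's English description precedes it below -/
import Mathlib

section
/- Let ℤ₃ denote the ring of 3-adic integers, set Δ = x³ − 27y² in ℤ₃[x, y], and let S be the ℤ₃-subalgebra of ℤ₃[x, y] generated by the nine elements 3x, 27y, 3Δ, 3Δ², 3xΔ, 3xΔ², 27yΔ, 27yΔ², Δ³. Then S is free as a ℤ₃-module with basis { (3x)^i (27y)^j Δ^k : 0 ≤ i ≤ 2, j ≥ 0, k ≥ 0, and (k ≡ 0 mod 3 or i + j > 0) } ∪ { 3Δ^k : k ≥ 1, k ≢ 0 mod 3 }. -/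
open MvPolynomial

/-- The polynomial ring `ℤ₃[x, y]` over the 3-adic integers. -/
abbrev PolyZ3 : Type := MvPolynomial (Fin 2) ℤ_[3]

/-- The variable `x` (corresponding to `c₄/3`). -/
noncomputable def xP : PolyZ3 := X 0

/-- The variable `y` (corresponding to `c₆/27`). -/
noncomputable def yP : PolyZ3 := X 1

/-- The discriminant `Δ = x³ − 27y²`. -/
noncomputable def deltaP : PolyZ3 := xP ^ 3 - 27 * yP ^ 2

/-- The `ℤ₃`-subalgebra of `ℤ₃[x, y]` generated by the nine elements
`3x, 27y, 3Δ, 3Δ², 3xΔ, 3xΔ², 27yΔ, 27yΔ², Δ³`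
(the image of the Adams–Novikov filtration-zero subring of `tmf₋`). -/
noncomputable def S3 : Subalgebra ℤ_[3] PolyZ3 :=
  Algebra.adjoin ℤ_[3]
    {3 * xP, 27 * yP, 3 * deltaP, 3 * deltaP ^ 2, 3 * xP * deltaP, 3 * xP * deltaP ^ 2,
      27 * yP * deltaP, 27 * yP * deltaP ^ 2, deltaP ^ 3}

/-- Index type for the claimed basis of `S`: triples `(i, j, k)` with `0 ≤ i ≤ 2`,
`j, k ≥ 0` and (`k ≡ 0 mod 3` or `i + j > 0`), together with naturals `k ≥ 1` with
`k ≢ 0 mod 3`. -/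
def BasisIndex : Type :=
  {p : Fin 3 × ℕ × ℕ // p.2.2 % 3 = 0 ∨ 0 < (p.1 : ℕ) + p.2.1} ⊕
    {k : ℕ // 1 ≤ k ∧ k % 3 ≠ 0}

/-- The claimed basis family: `(3x)^i (27y)^j Δ^k` on the first summand and
`3Δ^k` on the second. -/
noncomputable def basisFamily : BasisIndex → PolyZ3
  | .inl p => (3 * xP) ^ (p.1.1 : ℕ) * (27 * yP) ^ p.1.2.1 * deltaP ^ p.1.2.2
  | .inr k => 3 * deltaP ^ (k : ℕ)

noncomputable def Efn (a b : ℕ) : Fin 2 →₀ ℕ :=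
  Finsupp.single 0 a + Finsupp.single 1 b

lemma Efn_inj {a b a' b' : ℕ} : Efn a b = Efn a' b' ↔ a = a' ∧ b = b' := by
  constructor
  · intro h
    have h0 := DFunLike.congr_fun h 0
    have h1 := DFunLike.congr_fun h 1
    simp [Efn, Finsupp.single_apply] at h0 h1
    exact ⟨h0, h1⟩
  · rintro ⟨rfl, rfl⟩; rfl

lemma xy_pow (a b : ℕ) : (xP : PolyZ3) ^ a * yP ^ b = monomial (Efn a b) 1 := by
  rw [xP, yP, X_pow_eq_monomial, X_pow_eq_monomial, monomial_mul, one_mul]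
  rfl

lemma coeff_Cxy (c : ℤ_[3]) (a b a' b' : ℕ) :
    coeff (Efn a b) (C c * (xP ^ a' * yP ^ b')) = if a' = a ∧ b' = b then c else 0 := by
  rw [xy_pow, coeff_C_mul, coeff_monomial]
  simp [Efn_inj]

lemma C3 : (C (3:ℤ_[3]) : PolyZ3) = 3 := map_ofNat _ 3
lemma C27 : (C (27:ℤ_[3]) : PolyZ3) = 27 := map_ofNat _ 27

lemma delta_pow (k : ℕ) : (deltaP : PolyZ3) ^ k =
    ∑ m ∈ Finset.range (k+1),
      C ((-1)^(m+k) * 27^(k-m) * (k.choose m : ℤ_[3])) * (xP ^ (3*m) * yP ^ (2*(k-m))) := by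
  rw [deltaP, sub_pow]
  refine Finset.sum_congr rfl fun m hm => ?_
  simp only [map_mul, map_pow, map_neg, map_one, map_natCast, C27]
  ring

noncomputable def F (i j k : ℕ) : PolyZ3 := (3 * xP) ^ i * (27 * yP) ^ j * deltaP ^ k

lemma F_expand (i j k : ℕ) : F i j k =
    ∑ m ∈ Finset.range (k+1),
      C ((3:ℤ_[3])^i * 27^j * ((-1)^(m+k) * 27^(k-m) * (k.choose m : ℤ_[3])))
        * (xP ^ (i + 3*m) * yP ^ (j + 2*(k-m))) := by
  rw [F, delta_pow, Finset.mul_sum]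
  refine Finset.sum_congr rfl fun m hm => ?_
  simp only [map_mul, map_pow, map_neg, map_one, map_natCast, C27, C3, pow_add]
  ring

lemma coeff_F (i j k a b : ℕ) (hb : b ≤ j) :
    coeff (Efn a b) (F i j k) =
      if a = i + 3*k ∧ b = j then (3:ℤ_[3])^i * 27^j else 0 := by
  rw [F_expand, coeff_sum]
  rw [Finset.sum_eq_single k]
  · rw [coeff_Cxy]
    have hcond : (i + 3*k = a ∧ j + 2*(k-k) = b) ↔ (a = i + 3*k ∧ b = j) := by omega
    rw [if_congr hcond rfl rfl]
    split_ifs with h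
    · rw [Nat.sub_self, Nat.choose_self, show k + k = 2*k by ring, pow_mul]
      norm_num
    · rfl
  · intro m hm hmk
    rw [coeff_Cxy, if_neg]
    rintro ⟨-, h2⟩
    simp only [Finset.mem_range] at hm
    omega
  · intro h
    simp at h

def jy : BasisIndex → ℕ
  | .inl p => p.1.2.1
  | .inr _ => 0

noncomputable def mark : BasisIndex → (Fin 2 →₀ ℕ)
  | .inl p => Efn ((p.1.1 : ℕ) + 3 * p.1.2.2) p.1.2.1
  | .inr k => Efn (3 * (k : ℕ)) 0

lemma basisFamily_inl (p) : basisFamily (.inl p) = F (p.1.1 : ℕ) p.1.2.1 p.1.2.2 := rfl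

lemma basisFamily_inr (k) : basisFamily (.inr k) = C (3:ℤ_[3]) * F 0 0 (k:ℕ) := by
  simp [basisFamily, F, C3]

lemma coeff_mark_diag (e : BasisIndex) : coeff (mark e) (basisFamily e) ≠ 0 := by
  rcases e with ⟨⟨i, j, k⟩, hp⟩ | ⟨k, hk⟩
  · rw [basisFamily_inl, mark, coeff_F _ _ _ _ _ le_rfl, if_pos ⟨rfl, rfl⟩]
    exact mul_ne_zero (pow_ne_zero _ (by norm_num)) (pow_ne_zero _ (by norm_num))
  · rw [basisFamily_inr, mark, coeff_C_mul, coeff_F _ _ _ _ _ le_rfl,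
      if_pos ⟨by ring, rfl⟩]
    norm_num

lemma coeff_mark_ne (e e' : BasisIndex) (hj : jy e ≤ jy e') (hne : e' ≠ e) :
    coeff (mark e) (basisFamily e') = 0 := by
  rcases e with ⟨⟨i, j, k⟩, hp⟩ | ⟨k, hk⟩ <;>
    rcases e' with ⟨⟨i', j', k'⟩, hp'⟩ | ⟨k', hk'⟩
  · have hj' : j ≤ j' := hj
    have hi2 : (i : ℕ) < 3 := i.isLt
    have hi2' : (i' : ℕ) < 3 := i'.isLt
    rw [basisFamily_inl, mark]
    dsimp only
    rw [coeff_F _ _ _ _ _ hj', if_neg]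
    rintro ⟨h1, h2⟩
    apply hne
    obtain rfl : i' = i := Fin.ext (by omega)
    obtain rfl : j' = j := h2.symm
    obtain rfl : k' = k := by omega
    rfl
  · have hj' : j ≤ 0 := hj
    have hi2 : (i : ℕ) < 3 := i.isLt
    have hp2 : k % 3 = 0 ∨ 0 < (i : ℕ) + j := hp
    rw [basisFamily_inr, mark]
    dsimp only
    rw [coeff_C_mul, coeff_F _ _ _ _ _ hj', if_neg, mul_zero]
    rintro ⟨h1, h2⟩
    omega
  · have hi2' : (i' : ℕ) < 3 := i'.isLt
    have hp2 : k' % 3 = 0 ∨ 0 < (i' : ℕ) + j' := hp'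
    have hk2 : 1 ≤ k ∧ k % 3 ≠ 0 := hk
    rw [basisFamily_inl, mark]
    dsimp only
    rw [coeff_F _ _ _ _ _ (Nat.zero_le j'), if_neg]
    rintro ⟨h1, h2⟩
    omega
  · have hne2 : (k' : ℕ) ≠ (k : ℕ) := fun h =>
      hne (congrArg Sum.inr (Subtype.ext h))
    rw [basisFamily_inr, mark]
    dsimp only
    rw [coeff_C_mul, coeff_F _ _ _ _ _ le_rfl, if_neg, mul_zero]
    rintro ⟨h1, h2⟩
    omega

theorem basisFamily_linearIndependent : LinearIndependent ℤ_[3] basisFamily := by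
  rw [linearIndependent_iff]
  intro l hl
  by_contra hne
  obtain ⟨e, he, hmin⟩ := l.support.exists_min_image jy (Finsupp.support_nonempty_iff.mpr hne)
  have h0 : coeff (mark e) (Finsupp.linearCombination ℤ_[3] basisFamily l) = 0 := by
    rw [hl]; simp
  rw [Finsupp.linearCombination_apply, Finsupp.sum, coeff_sum] at h0
  rw [Finset.sum_eq_single e (fun e' he' hne' =>
      by rw [coeff_smul, coeff_mark_ne e e' (hmin e' he') hne', smul_zero])
      (fun h => absurd he h)] at h0
  rw [coeff_smul, smul_eq_mul] at h0
  rcases mul_eq_zero.mp h0 with h | h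
  · exact Finsupp.mem_support_iff.mp he h
  · exact coeff_mark_diag e h

lemma F_mem_S3 (i j k : ℕ) (hi : i ≤ 2) (h : k % 3 = 0 ∨ 0 < i + j) : F i j k ∈ S3 := by
  have gx : 3 * xP ∈ S3 := Algebra.subset_adjoin (by simp)
  have gy : 27 * yP ∈ S3 := Algebra.subset_adjoin (by simp)
  have gd3 : deltaP ^ 3 ∈ S3 := Algebra.subset_adjoin (by simp)
  have gxd : ∀ r, r = 1 ∨ r = 2 → 3 * xP * deltaP ^ r ∈ S3 := by
    rintro r (rfl | rfl)
    · rw [pow_one]; exact Algebra.subset_adjoin (by simp)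
    · exact Algebra.subset_adjoin (by simp)
  have gyd : ∀ r, r = 1 ∨ r = 2 → 27 * yP * deltaP ^ r ∈ S3 := by
    rintro r (rfl | rfl)
    · rw [pow_one]; exact Algebra.subset_adjoin (by simp)
    · exact Algebra.subset_adjoin (by simp)
  obtain ⟨q, r, hr, rfl⟩ : ∃ q r, r < 3 ∧ k = 3 * q + r :=
    ⟨k / 3, k % 3, Nat.mod_lt _ (by norm_num), by omega⟩
  rcases (show r = 0 ∨ (r = 1 ∨ r = 2) by omega) with rfl | hr12
  · have : F i j (3 * q + 0) = (3 * xP) ^ i * (27 * yP) ^ j * (deltaP ^ 3) ^ q := by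
      rw [F, Nat.add_zero, pow_mul]
    rw [this]
    exact mul_mem (mul_mem (pow_mem gx i) (pow_mem gy j)) (pow_mem gd3 q)
  · have hij : 0 < i + j := by
      rcases h with h | h
      · omega
      · exact h
    rcases (show 0 < i ∨ (i = 0 ∧ 0 < j) by omega) with hi1 | ⟨rfl, hj1⟩
    · obtain ⟨i', rfl⟩ : ∃ i', i = i' + 1 := ⟨i - 1, by omega⟩
      have : F (i' + 1) j (3 * q + r) =
          (3 * xP * deltaP ^ r) * ((3 * xP) ^ i' * (27 * yP) ^ j * (deltaP ^ 3) ^ q) := by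
        rw [F, pow_succ, pow_add, pow_mul]
        ring
      rw [this]
      exact mul_mem (gxd r hr12)
        (mul_mem (mul_mem (pow_mem gx i') (pow_mem gy j)) (pow_mem gd3 q))
    · obtain ⟨j', rfl⟩ : ∃ j', j = j' + 1 := ⟨j - 1, by omega⟩
      have : F 0 (j' + 1) (3 * q + r) =
          (27 * yP * deltaP ^ r) * ((27 * yP) ^ j' * (deltaP ^ 3) ^ q) := by
        rw [F, pow_zero, pow_succ, pow_add, pow_mul]
        ring
      rw [this]
      exact mul_mem (gyd r hr12) (mul_mem (pow_mem gy j') (pow_mem gd3 q))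

lemma threeD_mem_S3 (k : ℕ) (h1 : 1 ≤ k) (h3 : k % 3 ≠ 0) : 3 * deltaP ^ k ∈ S3 := by
  have gd3 : deltaP ^ 3 ∈ S3 := Algebra.subset_adjoin (by simp)
  have gdr : ∀ r, r = 1 ∨ r = 2 → 3 * deltaP ^ r ∈ S3 := by
    rintro r (rfl | rfl)
    · rw [pow_one]; exact Algebra.subset_adjoin (by simp)
    · exact Algebra.subset_adjoin (by simp)
  obtain ⟨q, r, hr12, rfl⟩ : ∃ q r, (r = 1 ∨ r = 2) ∧ k = 3 * q + r :=
    ⟨k / 3, k % 3, by omega, by omega⟩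
  have : 3 * deltaP ^ (3 * q + r) = (3 * deltaP ^ r) * (deltaP ^ 3) ^ q := by
    rw [pow_add, pow_mul]
    ring
  rw [this]
  exact mul_mem (gdr r hr12) (pow_mem gd3 q)

noncomputable def M : Submodule ℤ_[3] PolyZ3 := Submodule.span ℤ_[3] (Set.range basisFamily)

lemma mem_M_F (i j k : ℕ) (hi : i < 3) (h : k % 3 = 0 ∨ 0 < i + j) : F i j k ∈ M := by
  have : F i j k = basisFamily (Sum.inl ⟨(⟨i, hi⟩, j, k), h⟩) := rfl
  rw [this]
  exact Submodule.subset_span (Set.mem_range_self _)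

lemma mem_M_3d (k : ℕ) (h1 : 1 ≤ k) (h3 : k % 3 ≠ 0) : (3 : PolyZ3) * deltaP ^ k ∈ M := by
  have : (3 : PolyZ3) * deltaP ^ k = basisFamily (Sum.inr ⟨k, h1, h3⟩) := rfl
  rw [this]
  exact Submodule.subset_span (Set.mem_range_self _)

lemma smul_eq_mul3 (p : PolyZ3) : (3 : ℤ_[3]) • p = 3 * p := by
  rw [smul_eq_C_mul, C3]

lemma smul_eq_mul9 (p : PolyZ3) : (9 : ℤ_[3]) • p = 9 * p := by
  rw [smul_eq_C_mul, map_ofNat]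

lemma smul_eq_mul27 (p : PolyZ3) : (27 : ℤ_[3]) • p = 27 * p := by
  rw [smul_eq_C_mul, C27]

lemma mem_M_3F (i j k : ℕ) (hi : i < 3) : (3 : PolyZ3) * F i j k ∈ M := by
  by_cases h : k % 3 = 0 ∨ 0 < i + j
  · rw [← smul_eq_mul3]
    exact Submodule.smul_mem _ _ (mem_M_F i j k hi h)
  · push_neg at h
    obtain ⟨h3, hij⟩ := h
    obtain ⟨rfl, rfl⟩ : i = 0 ∧ j = 0 := by omega
    have : (3 : PolyZ3) * F 0 0 k = 3 * deltaP ^ k := by rw [F]; ring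
    rw [this]
    exact mem_M_3d k (by omega) h3

lemma mem_M_27F (i j k : ℕ) (hi : i < 3) : (27 : PolyZ3) * F i j k ∈ M := by
  by_cases h : k % 3 = 0 ∨ 0 < i + j
  · rw [← smul_eq_mul27]
    exact Submodule.smul_mem _ _ (mem_M_F i j k hi h)
  · push_neg at h
    obtain ⟨h3, hij⟩ := h
    obtain ⟨rfl, rfl⟩ : i = 0 ∧ j = 0 := by omega
    have : (27 : PolyZ3) * F 0 0 k = (9 : ℤ_[3]) • (3 * deltaP ^ k) := by
      rw [smul_eq_mul9, F]; ring
    rw [this]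
    exact Submodule.smul_mem _ _ (mem_M_3d k (by omega) h3)

lemma F_mul (i j k i' j' k' : ℕ) :
    F i j k * F i' j' k' = F (i + i') (j + j') (k + k') := by
  simp only [F, pow_add]
  ring

lemma mul_basis_mem (e e' : BasisIndex) : basisFamily e * basisFamily e' ∈ M := by
  rcases e with ⟨⟨i, j, k⟩, hp⟩ | ⟨k, hk⟩ <;>
    rcases e' with ⟨⟨i', j', k'⟩, hp'⟩ | ⟨k', hk'⟩
  · have hp2 : k % 3 = 0 ∨ 0 < (i : ℕ) + j := hp
    have hp2' : k' % 3 = 0 ∨ 0 < (i' : ℕ) + j' := hp'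
    have hi2 : (i : ℕ) < 3 := i.isLt
    have hi2' : (i' : ℕ) < 3 := i'.isLt
    rw [basisFamily_inl, basisFamily_inl]
    dsimp only
    rw [F_mul]
    rcases lt_or_ge ((i : ℕ) + (i' : ℕ)) 3 with hI | hI
    · exact mem_M_F _ _ _ hI (by omega)
    · obtain ⟨c, hc⟩ : ∃ c, (i : ℕ) + (i' : ℕ) = c + 3 := ⟨(i : ℕ) + (i' : ℕ) - 3, by omega⟩
      rw [hc]
      have key : F (c + 3) (j + j') (k + k') =
          27 * F c (j + j') (k + k' + 1) + F c (j + j' + 2) (k + k') := by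
        simp only [F, deltaP, pow_add, pow_succ]
        ring
      rw [key]
      exact add_mem (mem_M_27F _ _ _ (by omega)) (mem_M_F _ _ _ (by omega) (by omega))
  · rw [basisFamily_inl, basisFamily_inr, C3]
    dsimp only
    have : F (i : ℕ) j k * (3 * F 0 0 (k' : ℕ)) = 3 * F (i : ℕ) j (k + k') := by
      simp only [F, pow_add]
      ring
    rw [this]
    exact mem_M_3F _ _ _ i.isLt
  · rw [basisFamily_inl, basisFamily_inr, C3]
    dsimp only
    have : 3 * F 0 0 (k : ℕ) * F (i' : ℕ) j' k' = 3 * F (i' : ℕ) j' (k + k') := by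
      simp only [F, pow_add]
      ring
    rw [this]
    exact mem_M_3F _ _ _ i'.isLt
  · rw [basisFamily_inr, basisFamily_inr, C3]
    dsimp only
    have : 3 * F 0 0 (k : ℕ) * (3 * F 0 0 (k' : ℕ)) = (3 : ℤ_[3]) • (3 * deltaP ^ (k + k')) := by
      rw [smul_eq_mul3]
      simp only [F, pow_add]
      ring
    rw [this]
    by_cases h3 : (k + k') % 3 = 0
    · have : (3 : PolyZ3) * deltaP ^ (k + k') = 3 * F 0 0 (k + k') := by rw [F]; ring
      rw [this]
      exact Submodule.smul_mem _ _ (mem_M_3F 0 0 _ (by omega))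
    · exact Submodule.smul_mem _ _ (mem_M_3d _ (by omega) h3)

lemma one_mem_M : (1 : PolyZ3) ∈ M := by
  have : (1 : PolyZ3) = basisFamily (Sum.inl ⟨(0, 0, 0), Or.inl rfl⟩) := by
    simp [basisFamily]
  rw [this]
  exact Submodule.subset_span (Set.mem_range_self _)

lemma mul_mem_M : ∀ x ∈ M, ∀ y ∈ M, x * y ∈ M := by
  have hMM : M * M ≤ M := by
    rw [M, Submodule.span_mul_span, Submodule.span_le]
    rintro z ⟨_, ⟨e, rfl⟩, _, ⟨e', rfl⟩, rfl⟩
    exact mul_basis_mem e e'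
  exact fun x hx y hy => hMM (Submodule.mul_mem_mul hx hy)

/-- the subalgebra `S` of `ℤ₃[x, y]` generated by
`3x, 27y, 3Δ, 3Δ², 3xΔ, 3xΔ², 27yΔ, 27yΔ², Δ³` is free as a `ℤ₃`-module with basis
`{(3x)^i (27y)^j Δ^k : 0 ≤ i ≤ 2, k ≡ 0 mod 3 or i + j > 0} ∪ {3Δ^k : k ≥ 1, k ≢ 0 mod 3}`:
the family is linearly independent and spans exactly `S`. -/
theorem S3_free_with_basis :
    LinearIndependent ℤ_[3] basisFamily ∧
      Submodule.span ℤ_[3] (Set.range basisFamily) = Subalgebra.toSubmodule S3 := by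
  refine ⟨basisFamily_linearIndependent, le_antisymm ?_ ?_⟩
  · rw [Submodule.span_le]
    rintro _ ⟨e, rfl⟩
    show basisFamily e ∈ S3
    rcases e with ⟨⟨i, j, k⟩, hp⟩ | ⟨k, hk⟩
    · have hp2 : k % 3 = 0 ∨ 0 < (i : ℕ) + j := hp
      rw [basisFamily_inl]
      dsimp only
      exact F_mem_S3 _ _ _ (by have := i.isLt; omega) hp2
    · show 3 * deltaP ^ (k : ℕ) ∈ S3
      exact threeD_mem_S3 k hk.1 hk.2
  · intro a ha
    have hle : S3 ≤ M.toSubalgebra one_mem_M (fun x y hx hy => mul_mem_M x hx y hy) := by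
      apply Algebra.adjoin_le
      intro g hg
      show g ∈ M
      simp only [Set.mem_insert_iff, Set.mem_singleton_iff] at hg
      rcases hg with rfl | rfl | rfl | rfl | rfl | rfl | rfl | rfl | rfl
      · have h : 3 * xP = F 1 0 0 := by rw [F]; ring
        rw [h]; exact mem_M_F 1 0 0 (by norm_num) (Or.inr (by norm_num))
      · have h : 27 * yP = F 0 1 0 := by rw [F]; ring
        rw [h]; exact mem_M_F 0 1 0 (by norm_num) (Or.inr (by norm_num))
      · have h : 3 * deltaP = 3 * deltaP ^ 1 := by ring
        rw [h]; exact mem_M_3d 1 le_rfl (by norm_num)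
      · exact mem_M_3d 2 (by norm_num) (by norm_num)
      · have h : 3 * xP * deltaP = F 1 0 1 := by rw [F]; ring
        rw [h]; exact mem_M_F 1 0 1 (by norm_num) (Or.inr (by norm_num))
      · have h : 3 * xP * deltaP ^ 2 = F 1 0 2 := by rw [F]; ring
        rw [h]; exact mem_M_F 1 0 2 (by norm_num) (Or.inr (by norm_num))
      · have h : 27 * yP * deltaP = F 0 1 1 := by rw [F]; ring
        rw [h]; exact mem_M_F 0 1 1 (by norm_num) (Or.inr (by norm_num))
      · have h : 27 * yP * deltaP ^ 2 = F 0 1 2 := by rw [F]; ring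
        rw [h]; exact mem_M_F 0 1 2 (by norm_num) (Or.inr (by norm_num))
      · have h : deltaP ^ 3 = F 0 0 3 := by rw [F]; ring
        rw [h]; exact mem_M_F 0 0 3 (by norm_num) (Or.inl (by norm_num))
    exact hle ha
end

section
/- Let ℤ₃ denote the ring of 3-adic integers, grade ℤ₃[x, y] with deg x = 8 and deg y = 12, set Δ = x³ − 27y², and let S be the ℤ₃-subalgebra of ℤ₃[x, y] generated by 3x, 27y, 3Δ, 3Δ², 3xΔ, 3xΔ², 27yΔ, 27yΔ², Δ³. For integers k ≥ 0, j ∈ {0, 1}, i ∈ {0, 1, 2} and n = 24k + 12j + 8i, let V_n be the degree-n homogeneous component of ℤ₃[x, y] and S_n = S ∩ V_n. Then the quotient group V_n / S_n is isomorphic to ℤ/3 ⊕ (⊕_{m=1}^{k} ℤ/3^{6m}) if i = j = 0 and k ≢ 0 (mod 3), and is isomorphic to ⊕_{m=0}^{k} ℤ/3^{6m + 3j + i} if k ≡ 0 (mod 3) or i + j > 0. -/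
open MvPolynomial

/-- The degree-`n` homogeneous component of `ℤ₃[x, y]`, where `x` has degree 8 and
`y` has degree 12. -/
noncomputable def V (n : ℕ) : Submodule ℤ_[3] PolyZ3 :=
  weightedHomogeneousSubmodule ℤ_[3] ![8, 12] n

/-- `S ∩ Vₙ`, viewed as a submodule of the degree-`n` homogeneous component `Vₙ`. -/
noncomputable def Sn (n : ℕ) : Submodule ℤ_[3] (V n) :=
  Submodule.comap (V n).subtype (Subalgebra.toSubmodule S3)

open Finset

local notation "wt" => (![8, 12] : Fin 2 → ℕ)

lemma whom_pow {w : Fin 2 → ℕ} {p : PolyZ3} {m : ℕ} (h : IsWeightedHomogeneous w p m) (n : ℕ) :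
    IsWeightedHomogeneous w (p ^ n) (n * m) := by
  induction n with
  | zero => simpa using isWeightedHomogeneous_one ℤ_[3] w
  | succ d hd =>
      have := hd.mul h
      rw [← pow_succ] at this
      convert this using 1
      ring

lemma hom_xP : IsWeightedHomogeneous wt xP 8 := by
  have := isWeightedHomogeneous_X ℤ_[3] wt 0
  simpa [xP] using this

lemma hom_yP : IsWeightedHomogeneous wt yP 12 := by
  have := isWeightedHomogeneous_X ℤ_[3] wt 1
  simpa [yP] using this

lemma homC (r : ℤ_[3]) : IsWeightedHomogeneous wt (C r : PolyZ3) 0 :=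
  isWeightedHomogeneous_C wt r

lemma hC27 : (C (-27 : ℤ_[3]) : PolyZ3) = -27 := by rw [map_neg, map_ofNat]

lemma hom_deltaP : IsWeightedHomogeneous wt deltaP 24 := by
  have h1 : IsWeightedHomogeneous wt (xP ^ 3) 24 := by
    have := whom_pow hom_xP 3; simpa using this
  have h2 : IsWeightedHomogeneous wt ((C (-27) : PolyZ3) * yP ^ 2) 24 := by
    have := (homC (-27)).mul (whom_pow hom_yP 2)
    simpa using this
  have h : deltaP = xP ^ 3 + (C (-27) : PolyZ3) * yP ^ 2 := by
    rw [hC27, deltaP]; ring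
  rw [h]
  exact h1.add h2

/-- general product shape homogeneity -/
lemma hom_prod (E a b c : ℕ) :
    IsWeightedHomogeneous wt ((3 : PolyZ3) ^ E * xP ^ a * yP ^ b * deltaP ^ c)
      (8 * a + 12 * b + 24 * c) := by
  have h3 : IsWeightedHomogeneous wt ((3 : PolyZ3) ^ E) 0 := by
    have := whom_pow (p := (3 : PolyZ3)) (w := wt) (m := 0) (by
      have := homC (3 : ℤ_[3]); rwa [map_ofNat] at this) E
    simpa using this
  have := ((h3.mul (whom_pow hom_xP a)).mul (whom_pow hom_yP b)).mul (whom_pow hom_deltaP c)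
  convert this using 1
  ring

-- weight of an exponent vector
lemma weight_eval (d : Fin 2 →₀ ℕ) : (Finsupp.weight wt) d = d 0 * 8 + d 1 * 12 := by
  rw [Finsupp.weight_apply, Finsupp.sum_fintype]
  · simp [Fin.sum_univ_two]
  · intro i; simp

-- exponent vectors
noncomputable def dd (k i j s : ℕ) : Fin 2 →₀ ℕ :=
  Finsupp.single 0 (i + 3 * (k - s)) + Finsupp.single 1 (j + 2 * s)

lemma dd_apply0 (k i j s : ℕ) : dd k i j s 0 = i + 3 * (k - s) := by
  simp [dd, Finsupp.single_apply]

lemma dd_apply1 (k i j s : ℕ) : dd k i j s 1 = j + 2 * s := by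
  simp [dd, Finsupp.single_apply]

noncomputable def fP (k i j s : ℕ) : PolyZ3 := xP ^ (i + 3 * (k - s)) * yP ^ (j + 2 * s)
noncomputable def qP (k i j s : ℕ) : PolyZ3 := xP ^ i * yP ^ (j + 2 * s) * deltaP ^ (k - s)

lemma fP_eq_monomial (k i j s : ℕ) : fP k i j s = monomial (dd k i j s) 1 := by
  rw [fP, xP, yP, X_pow_eq_monomial, X_pow_eq_monomial, monomial_mul, dd, one_mul]

lemma dd_inj {k i j s u : ℕ} (h : dd k i j u = dd k i j s) : u = s := by
  have : j + 2 * u = j + 2 * s := by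
    have h1 := congrArg (fun f => f 1) h
    simpa [dd_apply1] using h1
  omega

lemma coeff_fP (k i j s u : ℕ) :
    coeff (dd k i j s) (fP k i j u) = if u = s then 1 else 0 := by
  rw [fP_eq_monomial, coeff_monomial]
  by_cases h : u = s
  · subst h; simp
  · rw [if_neg, if_neg h]
    intro hc; exact h (dd_inj hc)

lemma hC27' : (C (-27 : ℤ_[3]) : PolyZ3) = -27 := by rw [map_neg, map_ofNat]

lemma deltaP_eq : deltaP = (C (-27 : ℤ_[3]) : PolyZ3) * yP ^ 2 + xP ^ 3 := by
  rw [hC27', deltaP]; ring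

lemma qP_expand (k i j s : ℕ) (hs : s ≤ k) :
    qP k i j s = ∑ r ∈ range (k - s + 1),
      ((-27 : ℤ_[3]) ^ r * ((k - s).choose r : ℤ_[3])) • fP k i j (s + r) := by
  set c := k - s with hc
  have hdel : deltaP ^ c = ∑ r ∈ range (c + 1),
      (C ((-27 : ℤ_[3]) ^ r * ((c.choose r : ℕ) : ℤ_[3])) : PolyZ3) *
        (yP ^ (2 * r) * xP ^ (3 * (c - r))) := by
    rw [deltaP_eq, add_pow]
    refine Finset.sum_congr rfl fun r hr => ?_
    rw [map_mul, map_pow, map_natCast]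
    ring
  rw [qP, hdel, Finset.mul_sum]
  refine Finset.sum_congr rfl fun r hr => ?_
  rw [Finset.mem_range] at hr
  have h1 : k - (s + r) = c - r := by omega
  rw [fP, h1, smul_eq_C_mul, map_mul, map_pow, map_natCast]
  ring

lemma coeff_qP_self (k i j s : ℕ) (hs : s ≤ k) :
    coeff (dd k i j s) (qP k i j s) = 1 := by
  rw [qP_expand k i j s hs, coeff_sum]
  have : ∀ r ∈ range (k - s + 1),
      coeff (dd k i j s) (((-27 : ℤ_[3]) ^ r * ((k - s).choose r : ℤ_[3])) • fP k i j (s + r))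
        = if r = 0 then 1 else 0 := by
    intro r hr
    rw [coeff_smul, coeff_fP]
    by_cases h : r = 0
    · subst h; simp
    · rw [if_neg (by omega), if_neg h]; simp
  rw [Finset.sum_congr rfl this]
  simp

lemma coeff_qP_gt (k i j s u : ℕ) (hu : u ≤ k) (h : s < u) :
    coeff (dd k i j s) (qP k i j u) = 0 := by
  rw [qP_expand k i j u hu, coeff_sum]
  refine Finset.sum_eq_zero fun r hr => ?_
  rw [coeff_smul, coeff_fP, if_neg (by omega), smul_zero]

lemma hom_qP (k i j s : ℕ) (hs : s ≤ k) :
    IsWeightedHomogeneous wt (qP k i j s) (24 * k + 12 * j + 8 * i) := by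
  have h := ((whom_pow hom_xP i).mul (whom_pow hom_yP (j + 2 * s))).mul
    (whom_pow hom_deltaP (k - s))
  have : i * 8 + (j + 2 * s) * 12 + (k - s) * 24 = 24 * k + 12 * j + 8 * i := by omega
  rw [this] at h
  exact h

lemma hom_fP (k i j s : ℕ) (hs : s ≤ k) :
    IsWeightedHomogeneous wt (fP k i j s) (24 * k + 12 * j + 8 * i) := by
  have h := (whom_pow hom_xP (i + 3 * (k - s))).mul (whom_pow hom_yP (j + 2 * s))
  have : (i + 3 * (k - s)) * 8 + (j + 2 * s) * 12 = 24 * k + 12 * j + 8 * i := by omega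
  rw [this] at h
  exact h

lemma li_qP (k i j : ℕ) :
    LinearIndependent ℤ_[3] (fun s : Fin (k + 1) => qP k i j (s : ℕ)) := by
  rw [Fintype.linearIndependent_iff]
  intro g hg
  have key : ∀ N : ℕ, ∀ s : Fin (k + 1), (s : ℕ) = N → g s = 0 := by
    intro N
    induction N using Nat.strong_induction_on with
    | _ N IH =>
      intro s hsN
      have hco := congrArg (coeff (dd k i j (s : ℕ))) hg
      rw [coeff_sum] at hco
      simp only [coeff_smul, map_zero] at hco
      have hsum : ∀ t : Fin (k + 1), t ≠ s →
          g t • coeff (dd k i j (s : ℕ)) (qP k i j (t : ℕ)) = 0 := by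
        intro t ht
        rcases lt_or_gt_of_ne (fun h : (t : ℕ) = (s : ℕ) => ht (Fin.ext h)) with h | h
        · -- t < s : g t = 0 by IH
          rw [IH (t : ℕ) (by omega) t rfl, zero_smul]
        · rw [coeff_qP_gt k i j (s : ℕ) (t : ℕ) (by omega) h, smul_zero]
      rw [Finset.sum_eq_single s (fun t _ ht => hsum t ht) (by simp)] at hco
      rw [coeff_qP_self k i j (s : ℕ) (by omega)] at hco
      simpa using hco
  intro s; exact key (s : ℕ) s rfl

lemma fP_mem_span_qP (k i j : ℕ) :
    ∀ M : ℕ, ∀ s : ℕ, s ≤ k → k - s ≤ M →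
      fP k i j s ∈ Submodule.span ℤ_[3]
        (Set.range fun u : Fin (k + 1) => qP k i j (u : ℕ)) := by
  intro M
  induction M with
  | zero =>
    intro s hs hM
    have hsk : s = k := by omega
    have : qP k i j s = fP k i j s := by
      rw [qP_expand k i j s hs]
      have h0 : k - s = 0 := by omega
      rw [h0]
      simp
    rw [← this]
    exact Submodule.subset_span ⟨⟨s, by omega⟩, rfl⟩
  | succ M IH =>
    intro s hs hM
    by_cases hsk : k - s = 0
    · have : qP k i j s = fP k i j s := by
        rw [qP_expand k i j s hs, hsk]; simp
      rw [← this]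
      exact Submodule.subset_span ⟨⟨s, by omega⟩, rfl⟩
    · have hq : qP k i j s = fP k i j s + ∑ r ∈ range (k - s),
          ((-27 : ℤ_[3]) ^ (r + 1) * ((k - s).choose (r + 1) : ℤ_[3])) • fP k i j (s + (r + 1)) := by
        rw [qP_expand k i j s hs, Finset.sum_range_succ']
        simp [add_comm]
      have hf : fP k i j s = qP k i j s - ∑ r ∈ range (k - s),
          ((-27 : ℤ_[3]) ^ (r + 1) * ((k - s).choose (r + 1) : ℤ_[3])) • fP k i j (s + (r + 1)) := by
        rw [hq]; ring
      rw [hf]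
      refine Submodule.sub_mem _ (Submodule.subset_span ⟨⟨s, by omega⟩, rfl⟩) ?_
      refine Submodule.sum_mem _ fun r hr => ?_
      rw [Finset.mem_range] at hr
      exact Submodule.smul_mem _ _ (IH (s + (r + 1)) (by omega) (by omega))

lemma V_eq_span_qP (k i j n : ℕ) (hj : j ≤ 1) (hi : i ≤ 2)
    (hn : n = 24 * k + 12 * j + 8 * i) :
    V n = Submodule.span ℤ_[3] (Set.range fun u : Fin (k + 1) => qP k i j (u : ℕ)) := by
  apply le_antisymm
  · intro p hp
    have hhom : IsWeightedHomogeneous wt p n := hp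
    rw [p.as_sum]
    refine Submodule.sum_mem _ fun d hd => ?_
    have hw : (Finsupp.weight wt) d = n := hhom (mem_support_iff.mp hd)
    rw [weight_eval] at hw
    obtain ⟨s, hsk, h0, h1⟩ : ∃ s, s ≤ k ∧ d 0 = i + 3 * (k - s) ∧ d 1 = j + 2 * s := by
      refine ⟨(d 1 - j) / 2, by omega, by omega, by omega⟩
    have hdd : d = dd k i j s := by
      ext a
      fin_cases a
      · simpa [dd_apply0] using h0
      · simpa [dd_apply1] using h1
    rw [hdd]
    have hmono : (monomial (dd k i j s)) (coeff (dd k i j s) p)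
        = coeff (dd k i j s) p • fP k i j s := by
      rw [fP_eq_monomial, smul_monomial, smul_eq_mul, mul_one]
    rw [hmono]
    exact Submodule.smul_mem _ _ (fP_mem_span_qP k i j (k - s) s hsk le_rfl)
  · rw [Submodule.span_le]
    rintro - ⟨u, rfl⟩
    have := hom_qP k i j (u : ℕ) (by omega)
    rw [← hn] at this
    exact this

noncomputable def bV (k i j n : ℕ) (hj : j ≤ 1) (hi : i ≤ 2)
    (hn : n = 24 * k + 12 * j + 8 * i) : Module.Basis (Fin (k + 1)) ℤ_[3] (V n) :=
  (Module.Basis.span (li_qP k i j)).map (LinearEquiv.ofEq _ _ (V_eq_span_qP k i j n hj hi hn).symm)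

lemma bV_coe (k i j n : ℕ) (hj : j ≤ 1) (hi : i ≤ 2)
    (hn : n = 24 * k + 12 * j + 8 * i) (s : Fin (k + 1)) :
    ((bV k i j n hj hi hn s : V n) : PolyZ3) = qP k i j (s : ℕ) := by
  rw [bV, Module.Basis.map_apply, LinearEquiv.coe_ofEq_apply, Module.Basis.span_apply]

def genSet : Set PolyZ3 :=
  {3 * xP, 27 * yP, 3 * deltaP, 3 * deltaP ^ 2, 3 * xP * deltaP, 3 * xP * deltaP ^ 2,
    27 * yP * deltaP, 27 * yP * deltaP ^ 2, deltaP ^ 3}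

/-- every element of the multiplicative closure of the generators has standard shape -/
lemma closure_shape (p : PolyZ3) (hp : p ∈ Submonoid.closure genSet) :
    ∃ a b c γ : ℕ, p = (3 : PolyZ3) ^ (a + 3 * b + γ) * xP ^ a * yP ^ b * deltaP ^ c ∧
      (a = 0 → b = 0 → γ = 0 → c % 3 = 0) := by
  induction hp using Submonoid.closure_induction with
  | one => exact ⟨0, 0, 0, 0, by norm_num, fun _ _ _ => rfl⟩
  | mul x y hx hy ihx ihy =>
    obtain ⟨a1, b1, c1, g1, rfl, h1⟩ := ihx
    obtain ⟨a2, b2, c2, g2, rfl, h2⟩ := ihy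
    refine ⟨a1 + a2, b1 + b2, c1 + c2, g1 + g2, by ring, ?_⟩
    intro ha hb hg
    have := h1 (by omega) (by omega) (by omega)
    have := h2 (by omega) (by omega) (by omega)
    omega
  | mem x hx =>
    rcases hx with h | h | h | h | h | h | h | h | h
    · exact ⟨1, 0, 0, 0, by rw [h]; ring, by omega⟩
    · exact ⟨0, 1, 0, 0, by rw [h]; ring, by omega⟩
    · exact ⟨0, 0, 1, 1, by rw [h]; ring, by omega⟩
    · exact ⟨0, 0, 2, 1, by rw [h]; ring, by omega⟩
    · exact ⟨1, 0, 1, 0, by rw [h]; ring, by omega⟩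
    · exact ⟨1, 0, 2, 0, by rw [h]; ring, by omega⟩
    · exact ⟨0, 1, 1, 0, by rw [h]; ring, by omega⟩
    · exact ⟨0, 1, 2, 0, by rw [h]; ring, by omega⟩
    · exact ⟨0, 0, 3, 0, by rw [h]; ring, by omega⟩

lemma smul3 (E : ℕ) (p : PolyZ3) : (3 : ℤ_[3]) ^ E • p = (3 : PolyZ3) ^ E * p := by
  rw [smul_eq_C_mul, map_pow, map_ofNat]

lemma key_id (k i j s t c : ℕ) (hk : k = s + t + c) :
    (3 : PolyZ3) ^ (3 * t + 6 * s + 3 * j + i) * xP ^ (i + 3 * t) * yP ^ (j + 2 * s) * deltaP ^ c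
      = ∑ v ∈ range (t + 1), ((27 : ℤ_[3]) ^ v * ((t.choose v : ℕ) : ℤ_[3])) •
          ((3 : PolyZ3) ^ (6 * (s + (t - v)) + 3 * j + i) * qP k i j (s + (t - v))) := by
  have h3 : (27 : PolyZ3) = 3 ^ 3 := by norm_num
  have h6 : (729 : PolyZ3) = 3 ^ 6 := by norm_num
  have h27 : ∀ w : ℕ, (27 : PolyZ3) ^ w = 3 ^ (3 * w) := by
    intro w; rw [h3, ← pow_mul]
  have h729 : ∀ w : ℕ, (729 : PolyZ3) ^ w = 3 ^ (6 * w) := by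
    intro w; rw [h6, ← pow_mul]
  have hbase : (27 * deltaP + 729 * yP ^ 2 : PolyZ3) = 27 * xP ^ 3 := by
    rw [deltaP]; ring
  have hexp : (27 * xP ^ 3 : PolyZ3) ^ t = ∑ v ∈ range (t + 1),
      (27 * deltaP) ^ v * (729 * yP ^ 2) ^ (t - v) * ((t.choose v : ℕ) : PolyZ3) := by
    rw [← hbase, add_pow]
  have hmul := congrArg (fun z => (3 : PolyZ3) ^ (6 * s + 3 * j + i) * xP ^ i
      * yP ^ (j + 2 * s) * deltaP ^ c * z) hexp
  rw [Finset.mul_sum] at hmul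
  calc (3 : PolyZ3) ^ (3 * t + 6 * s + 3 * j + i) * xP ^ (i + 3 * t) * yP ^ (j + 2 * s)
        * deltaP ^ c
      = (3 : PolyZ3) ^ (6 * s + 3 * j + i) * xP ^ i * yP ^ (j + 2 * s) * deltaP ^ c
        * (27 * xP ^ 3) ^ t := by
        rw [mul_pow, h27 t]; ring
    _ = _ := by
        rw [hmul]
        refine Finset.sum_congr rfl fun v hv => ?_
        rw [Finset.mem_range] at hv
        have hq : qP k i j (s + (t - v)) = xP ^ i * yP ^ (j + 2 * (s + (t - v)))
            * deltaP ^ (c + v) := by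
          rw [qP]
          congr 2
          omega
        have hcast : ((t.choose v : ℕ) : PolyZ3) = C ((t.choose v : ℕ) : ℤ_[3]) := by
          rw [map_natCast]
        rw [hq, smul_eq_C_mul, map_mul, map_pow, map_ofNat, hcast]
        have hy : j + 2 * (s + (t - v)) = (j + 2 * s) + 2 * (t - v) := by omega
        rw [hy, mul_pow (27 : PolyZ3) deltaP, mul_pow (729 : PolyZ3) (yP ^ 2),
          h27 v, h729 (t - v)]
        have hw : 6 * (s + (t - v)) + 3 * j + i = 6 * (t - v) + (6 * s + 3 * j + i) := by
          omega
        rw [hw]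
        ring

lemma gen_mem : ∀ g ∈ genSet, g ∈ S3 := fun g hg => Algebra.subset_adjoin hg

lemma g1 : (3 * xP : PolyZ3) ∈ S3 := gen_mem _ (by left; rfl)
lemma g2 : (27 * yP : PolyZ3) ∈ S3 := gen_mem _ (by right; left; rfl)
lemma g3 : (3 * deltaP : PolyZ3) ∈ S3 := gen_mem _ (by right; right; left; rfl)
lemma g4 : (3 * deltaP ^ 2 : PolyZ3) ∈ S3 := gen_mem _ (by right; right; right; left; rfl)
lemma g5 : (3 * xP * deltaP : PolyZ3) ∈ S3 :=
  gen_mem _ (by right; right; right; right; left; rfl)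
lemma g6 : (3 * xP * deltaP ^ 2 : PolyZ3) ∈ S3 :=
  gen_mem _ (by right; right; right; right; right; left; rfl)
lemma g7 : (27 * yP * deltaP : PolyZ3) ∈ S3 :=
  gen_mem _ (by right; right; right; right; right; right; left; rfl)
lemma g8 : (27 * yP * deltaP ^ 2 : PolyZ3) ∈ S3 :=
  gen_mem _ (by right; right; right; right; right; right; right; left; rfl)
lemma g9 : (deltaP ^ 3 : PolyZ3) ∈ S3 :=
  gen_mem _ (by right; right; right; right; right; right; right; right; exact rfl)

lemma h3mem : (3 : PolyZ3) ∈ S3 := by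
  have := S3.algebraMap_mem (3 : ℤ_[3])
  rwa [show (algebraMap ℤ_[3] PolyZ3) 3 = 3 from map_ofNat _ 3] at this

lemma h27w : ∀ w : ℕ, (27 : PolyZ3) ^ w = 3 ^ (3 * w) := by
  intro w
  rw [show (27 : PolyZ3) = 3 ^ 3 by norm_num, ← pow_mul]

lemma mem_S3_gen (k i j s : ℕ) (hs : s ≤ k) (hcase : 0 < i + j + s ∨ (k - s) % 3 = 0) :
    (3 : PolyZ3) ^ (6 * s + 3 * j + i) * qP k i j s ∈ S3 := by
  obtain ⟨m, r, hmr, hr⟩ : ∃ m r, k - s = 3 * m + r ∧ r < 3 :=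
    ⟨(k - s) / 3, (k - s) % 3, by omega, by omega⟩
  rw [qP, hmr]
  rcases Nat.eq_zero_or_pos i with hi0 | hipos
  · rcases Nat.eq_zero_or_pos (j + s) with hjs0 | hjspos
    · -- i = 0, j = 0, s = 0, need r = 0
      have hj0 : j = 0 := by omega
      have hs0 : s = 0 := by omega
      have hr0 : r = 0 := by
        rcases hcase with h | h
        · omega
        · omega
      subst hi0 hj0 hs0 hr0
      have : (3 : PolyZ3) ^ (6 * 0 + 3 * 0 + 0) * (xP ^ 0 * yP ^ (0 + 2 * 0)
          * deltaP ^ (3 * m + 0)) = (deltaP ^ 3) ^ m := by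
        rw [← pow_mul]
        ring
      rw [this]
      exact pow_mem g9 m
    · -- i = 0, j + 2s ≥ 1
      obtain ⟨w, hw⟩ : ∃ w, j + 2 * s = w + 1 := ⟨j + 2 * s - 1, by omega⟩
      subst hi0
      have key : ∀ G : PolyZ3, G ∈ S3 → G = 27 * yP * deltaP ^ r →
          (3 : PolyZ3) ^ (6 * s + 3 * j + 0) * (xP ^ 0 * yP ^ (j + 2 * s)
            * deltaP ^ (3 * m + r)) ∈ S3 := by
        intro G hG hGeq
        have heq : (3 : PolyZ3) ^ (6 * s + 3 * j + 0) * (xP ^ 0 * yP ^ (j + 2 * s)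
            * deltaP ^ (3 * m + r)) = (27 * yP) ^ w * G * (deltaP ^ 3) ^ m := by
          rw [hGeq, mul_pow (27 : PolyZ3) yP, h27w w, hw]
          have h6 : 6 * s + 3 * j + 0 = 3 * w + 3 := by omega
          rw [h6, show (27 : PolyZ3) = 3 ^ 3 by norm_num]
          ring
        rw [heq]
        exact mul_mem (mul_mem (pow_mem g2 w) hG) (pow_mem g9 m)
      interval_cases r
      · exact key (27 * yP) g2 (by rw [pow_zero, mul_one])
      · exact key (27 * yP * deltaP) g7 (by rw [pow_one])
      · exact key (27 * yP * deltaP ^ 2) g8 rfl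
  · -- i ≥ 1
    obtain ⟨i', hi'⟩ : ∃ i', i = i' + 1 := ⟨i - 1, by omega⟩
    subst hi'
    have key : ∀ G : PolyZ3, G ∈ S3 → G = 3 * xP * deltaP ^ r →
        (3 : PolyZ3) ^ (6 * s + 3 * j + (i' + 1)) * (xP ^ (i' + 1) * yP ^ (j + 2 * s)
          * deltaP ^ (3 * m + r)) ∈ S3 := by
      intro G hG hGeq
      have heq : (3 : PolyZ3) ^ (6 * s + 3 * j + (i' + 1)) * (xP ^ (i' + 1) * yP ^ (j + 2 * s)
          * deltaP ^ (3 * m + r)) = (3 * xP) ^ i' * G * (27 * yP) ^ (j + 2 * s)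
            * (deltaP ^ 3) ^ m := by
        rw [hGeq, mul_pow (3 : PolyZ3) xP, mul_pow (27 : PolyZ3) yP, h27w (j + 2 * s)]
        have h6 : 6 * s + 3 * j + (i' + 1) = i' + 1 + 3 * (j + 2 * s) := by omega
        rw [h6]
        ring
      rw [heq]
      exact mul_mem (mul_mem (mul_mem (pow_mem g1 i') hG) (pow_mem g2 (j + 2 * s)))
        (pow_mem g9 m)
    interval_cases r
    · exact key (3 * xP) g1 (by rw [pow_zero, mul_one])
    · exact key (3 * xP * deltaP) g5 (by rw [pow_one])
    · exact key (3 * xP * deltaP ^ 2) g6 rfl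

lemma mem_S3_special (k : ℕ) : (3 : PolyZ3) * qP k 0 0 0 ∈ S3 := by
  obtain ⟨m, r, hmr, hr⟩ : ∃ m r, k - 0 = 3 * m + r ∧ r < 3 :=
    ⟨(k - 0) / 3, (k - 0) % 3, by omega, by omega⟩
  rw [qP, hmr]
  have hsimp : (3 : PolyZ3) * (xP ^ 0 * yP ^ (0 + 2 * 0) * deltaP ^ (3 * m + r))
      = 3 * deltaP ^ r * (deltaP ^ 3) ^ m := by
    ring
  rw [hsimp]
  interval_cases r
  · exact mul_mem (by rw [pow_zero, mul_one]; exact h3mem) (pow_mem g9 m)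
  · exact mul_mem (by rw [pow_one]; exact g3) (pow_mem g9 m)
  · exact mul_mem g4 (pow_mem g9 m)

set_option maxHeartbeats 2000000 in
lemma S3_proj_mem (k i j n : ℕ) (hj : j ≤ 1) (hi : i ≤ 2) (hn : n = 24 * k + 12 * j + 8 * i)
    (e : Fin (k + 1) → ℕ)
    (hE1 : ∀ m : Fin (k + 1), 0 < (m : ℕ) + i + j → e m = 6 * (m : ℕ) + 3 * j + i)
    (hE2 : i = 0 → j = 0 → e ⟨0, by omega⟩ ≤ 1)
    (hE3 : i = 0 → j = 0 → k % 3 = 0 → e ⟨0, by omega⟩ = 0)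
    (p : PolyZ3) (hp : p ∈ S3) :
    (weightedHomogeneousComponent wt n) p ∈ Submodule.span ℤ_[3]
      (Set.range fun u : Fin (k + 1) => (3 : ℤ_[3]) ^ (e u) • qP k i j (u : ℕ)) := by
  set W := Submodule.span ℤ_[3]
      (Set.range fun u : Fin (k + 1) => (3 : ℤ_[3]) ^ (e u) • qP k i j (u : ℕ)) with hW
  have hp' : p ∈ Submodule.span ℤ_[3] ((Submonoid.closure genSet : Submonoid PolyZ3) : Set PolyZ3) := by
    rw [← Algebra.adjoin_eq_span]
    exact hp
  clear hp
  induction hp' using Submodule.span_induction with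
  | zero => rw [map_zero]; exact W.zero_mem
  | add x y hx hy ihx ihy => rw [map_add]; exact W.add_mem ihx ihy
  | smul a x hx ihx => rw [map_smul]; exact W.smul_mem a ihx
  | mem g hg =>
    obtain ⟨a, b, c, γ, rfl, hinv⟩ := closure_shape g hg
    have hhom := hom_prod (a + 3 * b + γ) a b c
    by_cases hd : 8 * a + 12 * b + 24 * c = n
    · rw [hd] at hhom
      rw [hhom.weightedHomogeneousComponent_same]
      -- parametrize
      obtain ⟨s, t, ha, hb, hk⟩ : ∃ s t, a = i + 3 * t ∧ b = j + 2 * s ∧ k = s + t + c := by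
        refine ⟨(b - j) / 2, (a - i) / 3, by omega, by omega, by omega⟩
      have hsplit : (3 : PolyZ3) ^ (a + 3 * b + γ) * xP ^ a * yP ^ b * deltaP ^ c
          = (3 : ℤ_[3]) ^ γ • ((3 : PolyZ3) ^ (3 * t + 6 * s + 3 * j + i) * xP ^ (i + 3 * t)
            * yP ^ (j + 2 * s) * deltaP ^ c) := by
        rw [smul3, ha, hb]
        have : i + 3 * t + 3 * (j + 2 * s) + γ = γ + (3 * t + 6 * s + 3 * j + i) := by omega
        rw [this, pow_add]
        ring
      rw [hsplit, key_id k i j s t c hk, Finset.smul_sum]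
      refine Submodule.sum_mem _ fun v hv => ?_
      rw [Finset.mem_range] at hv
      set m : ℕ := s + (t - v) with hm
      have hmk : m < k + 1 := by omega
      set mF : Fin (k + 1) := ⟨m, hmk⟩ with hmF
      -- find δ with e mF + δ = γ + 3 * v + (6 * m + 3 * j + i)
      obtain ⟨δ, hδ⟩ : ∃ δ, e mF + δ = γ + 3 * v + (6 * m + 3 * j + i) := by
        by_cases hpos : 0 < m + i + j
        · have h1 := hE1 mF hpos
          have h2 : (mF : ℕ) = m := rfl
          rw [h2] at h1
          exact ⟨γ + 3 * v, by omega⟩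
        · have hi0 : i = 0 := by omega
          have hj0 : j = 0 := by omega
          have hm0 : m = 0 := by omega
          have hs0 : s = 0 := by omega
          have htv : t = v := by omega
          have hmF0 : mF = ⟨0, by omega⟩ := Fin.ext hm0
          have h1 : e mF ≤ 1 := by rw [hmF0]; exact hE2 hi0 hj0
          rcases Nat.eq_zero_or_pos v with hv0 | hvpos
          · have ht0 : t = 0 := by omega
            rcases Nat.eq_zero_or_pos γ with hg0 | hgpos
            · have hc3 : c % 3 = 0 := hinv (by omega) (by omega) hg0
              have hk3 : k % 3 = 0 := by omega
              have h0 : e mF = 0 := by rw [hmF0]; exact hE3 hi0 hj0 hk3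
              exact ⟨0, by omega⟩
            · exact ⟨γ + 3 * v + (6 * m + 3 * j + i) - e mF, by omega⟩
          · exact ⟨γ + 3 * v + (6 * m + 3 * j + i) - e mF, by omega⟩
      -- rewrite the term as a scalar multiple of the generator
      have hterm : (3 : ℤ_[3]) ^ γ • (((27 : ℤ_[3]) ^ v * ((t.choose v : ℕ) : ℤ_[3])) •
          ((3 : PolyZ3) ^ (6 * (s + (t - v)) + 3 * j + i) * qP k i j (s + (t - v))))
          = (((t.choose v : ℕ) : ℤ_[3]) * 3 ^ δ) •
            ((3 : ℤ_[3]) ^ (e mF) • qP k i j (mF : ℕ)) := by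
        have hcoe : (mF : ℕ) = s + (t - v) := rfl
        simp only [← smul3, smul_smul, hcoe]
        congr 1
        have hppow : (3 : ℤ_[3]) ^ γ * 3 ^ (3 * v) * (3 : ℤ_[3]) ^ (6 * (s + (t - v)) + 3 * j + i)
            = 3 ^ δ * 3 ^ (e mF) := by
          rw [← pow_add, ← pow_add, ← pow_add]
          congr 1
          omega
        rw [show (27 : ℤ_[3]) = 3 ^ 3 by norm_num, ← pow_mul]
        linear_combination ((t.choose v : ℕ) : ℤ_[3]) * hppow
      rw [hterm]
      exact W.smul_mem _ (Submodule.subset_span ⟨mF, rfl⟩)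
    · rw [hhom.weightedHomogeneousComponent_ne n (fun hne => hd hne.symm)]
      exact W.zero_mem

lemma Sn_eq (k i j n : ℕ) (hj : j ≤ 1) (hi : i ≤ 2) (hn : n = 24 * k + 12 * j + 8 * i)
    (e : Fin (k + 1) → ℕ)
    (hE1 : ∀ m : Fin (k + 1), 0 < (m : ℕ) + i + j → e m = 6 * (m : ℕ) + 3 * j + i)
    (hE2 : i = 0 → j = 0 → e ⟨0, by omega⟩ ≤ 1)
    (hE3 : i = 0 → j = 0 → k % 3 = 0 → e ⟨0, by omega⟩ = 0)
    (hMem : ∀ u : Fin (k + 1), (3 : PolyZ3) ^ (e u) * qP k i j (u : ℕ) ∈ S3) :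
    Sn n = Submodule.span ℤ_[3]
      (Set.range fun u : Fin (k + 1) => (3 : ℤ_[3]) ^ (e u) • bV k i j n hj hi hn u) := by
  have hmap : Submodule.span ℤ_[3]
      (Set.range fun u : Fin (k + 1) => (3 : ℤ_[3]) ^ (e u) • qP k i j (u : ℕ))
      = Submodule.map (V n).subtype (Submodule.span ℤ_[3]
          (Set.range fun u : Fin (k + 1) => (3 : ℤ_[3]) ^ (e u) • bV k i j n hj hi hn u)) := by
    rw [Submodule.map_span]
    congr 1
    rw [← Set.range_comp]
    apply congrArg
    funext u
    simp only [Function.comp_apply, Submodule.coe_subtype]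
    rw [Submodule.coe_smul, bV_coe]
  apply le_antisymm
  · intro v hv
    have hvS : ((v : V n) : PolyZ3) ∈ S3 := hv
    have h2 := S3_proj_mem k i j n hj hi hn e hE1 hE2 hE3 _ hvS
    have hvhom : IsWeightedHomogeneous wt ((v : V n) : PolyZ3) n := (v : V n).2
    rw [hvhom.weightedHomogeneousComponent_same] at h2
    rw [hmap] at h2
    obtain ⟨w, hw, hww⟩ := h2
    have : w = v := Subtype.ext hww
    rwa [← this]
  · rw [Submodule.span_le]
    rintro - ⟨u, rfl⟩
    show ((3 : ℤ_[3]) ^ (e u) • bV k i j n hj hi hn u : V n) ∈ Sn n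
    have hco : (((3 : ℤ_[3]) ^ (e u) • bV k i j n hj hi hn u : V n) : PolyZ3)
        = (3 : PolyZ3) ^ (e u) * qP k i j (u : ℕ) := by
      rw [Submodule.coe_smul, bV_coe, smul3]
    show (((3 : ℤ_[3]) ^ (e u) • bV k i j n hj hi hn u : V n) : PolyZ3) ∈ S3
    rw [hco]
    exact hMem u



section QuotDiag
variable {R : Type*} [CommRing R] {ι : Type*} [Fintype ι] [DecidableEq ι]
variable {M : Type*} [AddCommGroup M] [Module R M]

lemma equivFun_smul_basis (b : Module.Basis ι R M) (d : ι → R) (s : ι) :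
    b.equivFun (d s • b s) = Pi.single s (d s) := by
  funext u
  rw [map_smul]
  have h := b.equivFun_self s u
  simp only [Pi.smul_apply, h, Pi.single_apply]
  by_cases hus : u = s
  · subst hus; simp
  · rw [if_neg (fun h' => hus h'.symm), if_neg hus, smul_zero]

lemma map_span_diag (b : Module.Basis ι R M) (d : ι → R) :
    Submodule.map (b.equivFun : M →ₗ[R] (ι → R))
        (Submodule.span R (Set.range fun s => d s • b s))
      = Submodule.pi Set.univ (fun s => Ideal.span {d s}) := by
  rw [Submodule.map_span, ← Set.range_comp]
  apply le_antisymm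
  · rw [Submodule.span_le]
    rintro - ⟨s, rfl⟩
    simp only [Function.comp_apply]
    rw [show (b.equivFun : M →ₗ[R] (ι → R)) (d s • b s) = Pi.single s (d s) from
      equivFun_smul_basis b d s]
    intro u _
    by_cases hus : u = s
    · subst hus; simp only [Pi.single_eq_same]
      exact Ideal.subset_span rfl
    · rw [Pi.single_eq_of_ne hus]
      exact (Ideal.span {d u}).zero_mem
  · intro v hv
    have hv' : ∀ u, v u ∈ Ideal.span {d u} := fun u => hv u (Set.mem_univ u)
    have hc : ∀ u, ∃ c, v u = c * d u := by
      intro u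
      obtain ⟨c, hc⟩ := Ideal.mem_span_singleton'.mp (hv' u)
      exact ⟨c, hc.symm⟩
    choose c hcv using hc
    have hvsum : v = ∑ u : ι, c u • ((b.equivFun : M →ₗ[R] (ι → R)) (d u • b u)) := by
      funext w
      rw [Finset.sum_apply]
      have : ∀ u, (c u • ((b.equivFun : M →ₗ[R] (ι → R)) (d u • b u))) w
          = if u = w then v w else 0 := by
        intro u
        rw [LinearEquiv.coe_coe, equivFun_smul_basis b d u]
        by_cases huw : u = w
        · subst huw; simp [hcv u, mul_comm]
        · simp [Pi.single_eq_of_ne (fun h => huw h), huw]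
      rw [Finset.sum_congr rfl fun u _ => this u]
      simp
    rw [hvsum]
    exact Submodule.sum_mem _ fun u _ =>
      Submodule.smul_mem _ _ (Submodule.subset_span ⟨u, rfl⟩)

noncomputable def quotDiagEquiv (b : Module.Basis ι R M) (d : ι → R) :
    (M ⧸ Submodule.span R (Set.range fun s => d s • b s)) ≃ₗ[R]
      ∀ s : ι, R ⧸ Ideal.span {d s} :=
  (Submodule.Quotient.equiv _ _ (b.equivFun) (map_span_diag b d)).trans
    (Submodule.quotientPi _)

end QuotDiag

noncomputable def padicQuotEquiv (E : ℕ) :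
    (ℤ_[3] ⧸ Ideal.span {(3 : ℤ_[3]) ^ E}) ≃+* ZMod (3 ^ E) := by
  haveI : NeZero (3 ^ E) := ⟨pow_ne_zero E (by norm_num)⟩
  have hker : Ideal.span {(3 : ℤ_[3]) ^ E} = RingHom.ker (PadicInt.toZModPow E) := by
    rw [PadicInt.ker_toZModPow]
    norm_num
  have hsurj : Function.Surjective (PadicInt.toZModPow (p := 3) E) := by
    intro z
    obtain ⟨a, rfl⟩ := ZMod.natCast_zmod_surjective z
    exact ⟨(a : ℤ_[3]), map_natCast _ a⟩
  exact (Ideal.quotEquivOfEq hker).trans (RingHom.quotientKerEquivOfSurjective hsurj)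

def zmodCongr {a b : ℕ} (h : a = b) : ZMod a ≃+ ZMod b := by subst h; exact AddEquiv.refl _

def piSplit {N : ℕ} (A : Fin (N + 1) → Type*) [∀ s, AddCommMonoid (A s)] :
    (∀ s, A s) ≃+ A 0 × ∀ m : Fin N, A m.succ where
  toFun p := (p 0, fun m => p m.succ)
  invFun p := Fin.cons p.1 p.2
  left_inv p := by
    funext s
    refine Fin.cases ?_ (fun m => ?_) s
    · simp
    · simp
  right_inv p := by
    ext <;> simp
  map_add' p q := rfl

def eSp (k : ℕ) : Fin (k + 1) → ℕ := fun m => if (m : ℕ) = 0 then 1 else 6 * (m : ℕ)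


set_option synthInstance.maxHeartbeats 1000000 in
set_option maxHeartbeats 2000000 in
/-- for `n = 24k + 12j + 8i` with `j ∈ {0, 1}` and `i ∈ {0, 1, 2}`, the
quotient `Vₙ / Sₙ` is `ℤ/3 ⊕ ⊕_{m=1}^{k} ℤ/3^{6m}` when `i = j = 0` and `k ≢ 0 (mod 3)`,
and is `⊕_{m=0}^{k} ℤ/3^{6m + 3j + i}` when `k ≡ 0 (mod 3)` or `i + j > 0`. -/
theorem quotient_by_S3_structure (k j i n : ℕ) (hj : j ≤ 1) (hi : i ≤ 2)
    (hn : n = 24 * k + 12 * j + 8 * i) :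
    (i = 0 → j = 0 → k % 3 ≠ 0 →
      Nonempty ((V n ⧸ Sn n) ≃+
        (ZMod 3 × ∀ m : Fin k, ZMod (3 ^ (6 * ((m : ℕ) + 1)))))) ∧
    (k % 3 = 0 ∨ 0 < i + j →
      Nonempty ((V n ⧸ Sn n) ≃+
        (∀ m : Fin (k + 1), ZMod (3 ^ (6 * (m : ℕ) + 3 * j + i))))) := by
  constructor
  · intro hi0 hj0 hk3
    subst hi0; subst hj0
    have hE1 : ∀ m : Fin (k + 1), 0 < (m : ℕ) + 0 + 0 → eSp k m = 6 * (m : ℕ) + 3 * 0 + 0 := by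
      intro m hm
      rw [eSp, if_neg (by omega)]
      omega
    have hE2 : (0:ℕ) = 0 → (0:ℕ) = 0 → eSp k ⟨0, by omega⟩ ≤ 1 := by
      intro _ _
      rw [eSp, if_pos rfl]
    have hE3 : (0:ℕ) = 0 → (0:ℕ) = 0 → k % 3 = 0 → eSp k ⟨0, by omega⟩ = 0 := by
      intro _ _ h
      exact absurd h hk3
    have hMem : ∀ u : Fin (k + 1), (3 : PolyZ3) ^ (eSp k u) * qP k 0 0 (u : ℕ) ∈ S3 := by
      intro u
      by_cases h0 : (u : ℕ) = 0
      · rw [eSp, if_pos h0, pow_one, h0]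
        exact mem_S3_special k
      · rw [eSp, if_neg h0]
        have := mem_S3_gen k 0 0 (u : ℕ) (by omega) (Or.inl (by omega))
        have hexp : 6 * (u : ℕ) + 3 * 0 + 0 = 6 * (u : ℕ) := by omega
        rwa [hexp] at this
    have A0 := Submodule.quotEquivOfEq _ _ (Sn_eq k 0 0 n hj hi hn (eSp k) hE1 hE2 hE3 hMem)
    have A1 := quotDiagEquiv (bV k 0 0 n hj hi hn) (fun u => (3 : ℤ_[3]) ^ (eSp k u))
    have A2 := AddEquiv.piCongrRight (fun s : Fin (k + 1) => (padicQuotEquiv (eSp k s)).toAddEquiv)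
    have A3 := piSplit (fun s : Fin (k + 1) => ZMod (3 ^ (eSp k s)))
    have h0 : 3 ^ (eSp k (0 : Fin (k + 1))) = 3 := by
      rw [eSp]
      norm_num
    have hsm : ∀ m : Fin k, 3 ^ (eSp k m.succ) = 3 ^ (6 * ((m : ℕ) + 1)) := by
      intro m
      rw [eSp]
      have : ((m.succ : Fin (k + 1)) : ℕ) = (m : ℕ) + 1 := rfl
      rw [this, if_neg (by omega)]
    have A4 := AddEquiv.prodCongr (zmodCongr h0)
      (AddEquiv.piCongrRight fun m : Fin k => zmodCongr (hsm m))
    exact ⟨A0.toAddEquiv.trans (A1.toAddEquiv.trans (A2.trans (A3.trans A4)))⟩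
  · intro hcase
    have hE1 : ∀ m : Fin (k + 1), 0 < (m : ℕ) + i + j →
        (fun m : Fin (k + 1) => 6 * (m : ℕ) + 3 * j + i) m = 6 * (m : ℕ) + 3 * j + i :=
      fun m _ => rfl
    have hE2 : i = 0 → j = 0 →
        (fun m : Fin (k + 1) => 6 * (m : ℕ) + 3 * j + i) ⟨0, by omega⟩ ≤ 1 := by
      intro hi0 hj0
      simp [hi0, hj0]
    have hE3 : i = 0 → j = 0 → k % 3 = 0 →
        (fun m : Fin (k + 1) => 6 * (m : ℕ) + 3 * j + i) ⟨0, by omega⟩ = 0 := by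
      intro hi0 hj0 _
      simp [hi0, hj0]
    have hMem : ∀ u : Fin (k + 1),
        (3 : PolyZ3) ^ (6 * (u : ℕ) + 3 * j + i) * qP k i j (u : ℕ) ∈ S3 := by
      intro u
      refine mem_S3_gen k i j (u : ℕ) (by omega) ?_
      rcases hcase with hk3 | hij
      · by_cases h0 : (u : ℕ) = 0
        · right; omega
        · left; omega
      · left; omega
    have A0 := Submodule.quotEquivOfEq _ _
      (Sn_eq k i j n hj hi hn (fun m : Fin (k + 1) => 6 * (m : ℕ) + 3 * j + i) hE1 hE2 hE3 hMem)
    have A1 := quotDiagEquiv (bV k i j n hj hi hn)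
      (fun u : Fin (k + 1) => (3 : ℤ_[3]) ^ (6 * (u : ℕ) + 3 * j + i))
    have A2 := AddEquiv.piCongrRight
      (fun s : Fin (k + 1) => (padicQuotEquiv (6 * (s : ℕ) + 3 * j + i)).toAddEquiv)
    exact ⟨A0.toAddEquiv.trans (A1.toAddEquiv.trans A2)⟩
end
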